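/- Define the basic sequence Q = (q_n) and digit sequence E = (E_n) by grouping the indices into consecutive blocks, the m-th block having length m (so Q = (2, 4,4, 6,6,6, 8,8,8,8, …) and E = (0, 0,2, 0,2,4, 0,2,4,6, …)): for the i-th index n of the m-th block (1 ≤ i ≤ m), q_n = 2m and E_n = 2(i−1). Let x = ∑_{n=1}^∞ E_n/(q_1 q_2 ⋯ q_n). Then x is Q-distribution normal but x/2 is not Q-distribution normal. -/

import Mathlib

open Filter Finset MeasureTheory

noncomputable section
open scoped Classical

/-- `cantorProd q n = q 1 * q 2 * ... * q n` (empty product for `n = 0`). -/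
def cantorProd (q : ℕ → ℕ) (n : ℕ) : ℕ := ∏ j ∈ Finset.Icc 1 n, q j

/-- `T_{Q,n}(x) = q_1 q_2 ⋯ q_n · x (mod 1)`. -/
def TQ (q : ℕ → ℕ) (n : ℕ) (x : ℝ) : ℝ := Int.fract ((cantorProd q n : ℝ) * x)

/-- A basic sequence: `q n ≥ 2` for all `n ≥ 1`. -/
def BasicSeq (q : ℕ → ℕ) : Prop := ∀ n, 1 ≤ n → 2 ≤ q n

/-- `Q` is infinite in limit: `q n → ∞`. -/
def InfiniteInLimit (q : ℕ → ℕ) : Prop := Filter.Tendsto q Filter.atTop Filter.atTop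

/-- `E` (indexed from 1) is the sequence of digits of the `Q`-Cantor series expansion of `x`:
`E n ∈ {0, …, q n − 1}`, `E n ≠ q n − 1` infinitely often, and
`x = ⌊x⌋ + ∑_{n ≥ 1} E n / (q 1 ⋯ q n)`. -/
def IsCantorDigits (q : ℕ → ℕ) (E : ℕ → ℕ) (x : ℝ) : Prop :=
  (∀ n, 1 ≤ n → E n < q n) ∧
  {n | 1 ≤ n ∧ E n ≠ q n - 1}.Infinite ∧
  x = (⌊x⌋ : ℝ) + ∑' n : ℕ, (E (n + 1) : ℝ) / (cantorProd q (n + 1) : ℝ)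

/-- `Q_n^{(k)} = ∑_{j=1}^n 1/(q_j q_{j+1} ⋯ q_{j+k-1})`. -/
def Qnk (q : ℕ → ℕ) (k n : ℕ) : ℝ :=
  ∑ j ∈ Finset.Icc 1 n, 1 / ∏ i ∈ Finset.Ico j (j + k), (q i : ℝ)

/-- `Q` is `k`-divergent. -/
def KDivergent (q : ℕ → ℕ) (k : ℕ) : Prop :=
  Filter.Tendsto (fun n => Qnk q k n) Filter.atTop Filter.atTop

/-- `N_n^Q(B, x)`: the number of indices `1 ≤ i ≤ n - |B| + 1` at which the block `B`
occurs in the digit sequence `E`. -/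
def blockCount (E : ℕ → ℕ) (B : List ℕ) (n : ℕ) : ℕ :=
  ((Finset.Icc 1 (n + 1 - B.length)).filter
    (fun i => ∀ t, t < B.length → E (i + t) = B.getD t 0)).card

/-- The digit sequence `E` is `Q`-normal of order `k`. -/
def QNormalOfOrder (q : ℕ → ℕ) (E : ℕ → ℕ) (k : ℕ) : Prop :=
  ∀ B : List ℕ, B.length = k →
    Filter.Tendsto (fun n => (blockCount E B n : ℝ) / Qnk q k n) Filter.atTop (nhds 1)

/-- A sequence (indexed from 0) is uniformly distributed mod 1. -/
def UDMod1 (z : ℕ → ℝ) : Prop :=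
  ∀ a b : ℝ, 0 ≤ a → a < b → b ≤ 1 →
    Filter.Tendsto
      (fun N => (((Finset.range N).filter (fun n => Int.fract (z n) ∈ Set.Ico a b)).card : ℝ) / N)
      Filter.atTop (nhds (b - a))

/-- `x` is `Q`-distribution normal: `(T_{Q,n}(x))_{n ≥ 0}` is uniformly distributed mod 1. -/
def QDistNormal (q : ℕ → ℕ) (x : ℝ) : Prop := UDMod1 (fun n => TQ q n x)

/-- A set of natural numbers has (natural) density zero. -/
def DensityZero (A : Set ℕ) : Prop :=
  Filter.Tendsto (fun N => (((Finset.Icc 1 N).filter (fun n => n ∈ A)).card : ℝ) / N)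
    Filter.atTop (nhds 0)

/-- The `n`-th digit (for `n ≥ 1`) of the `Q`-Cantor series expansion of `x`,
extracted via `E_n = ⌊q_n · T_{Q,n-1}(x)⌋`. -/
def cantorDigit (q : ℕ → ℕ) (x : ℝ) (n : ℕ) : ℤ := ⌊(q n : ℝ) * TQ q (n - 1) x⌋

/-- `ψ_{P,Q}(x) = ∑_{n ≥ 1} min(E_n, q_n − 1)/(q_1 ⋯ q_n)`, where `E` are the `P`-digits of `x`. -/
def psiMap (p q : ℕ → ℕ) (x : ℝ) : ℝ :=
  ∑' n : ℕ, ((min (cantorDigit p x (n + 1)) ((q (n + 1) : ℤ) - 1) : ℤ) : ℝ) /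
    (cantorProd q (n + 1) : ℝ)

/-- `N_n^Q(B, x)` defined via the canonical digits of the real number `x`. -/
def blockCountReal (q : ℕ → ℕ) (x : ℝ) (B : List ℕ) (n : ℕ) : ℕ :=
  ((Finset.Icc 1 (n + 1 - B.length)).filter
    (fun i => ∀ t, t < B.length → cantorDigit q x (i + t) = (B.getD t 0 : ℤ))).card

/-- The real number `x` is `Q`-normal of order `k`. -/
def QNormalOfOrderReal (q : ℕ → ℕ) (x : ℝ) (k : ℕ) : Prop :=
  ∀ B : List ℕ, B.length = k →
    Filter.Tendsto (fun n => (blockCountReal q x B n : ℝ) / Qnk q k n) Filter.atTop (nhds 1)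

/-- The discrepancy `D_N` of the finite sequence `x 1, …, x N` (of numbers in `[0,1)`). -/
def discrepancy (N : ℕ) (x : ℕ → ℝ) : ℝ :=
  sSup {d : ℝ | ∃ a b : ℝ, 0 ≤ a ∧ a ≤ b ∧ b ≤ 1 ∧
    d = |(((Finset.Icc 1 N).filter (fun n => x n ∈ Set.Ico a b)).card : ℝ) / N - (b - a)|}

/-- The block index `m` of position `n ≥ 1`: the least `m` with `n ≤ m(m+1)/2`, so that the
`m`-th block consists of the positions `m(m-1)/2 < n ≤ m(m+1)/2` (the `m`-th block has
length `m`). -/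
def blockM (n : ℕ) : ℕ :=
  Nat.find (⟨n, by
    rcases Nat.eq_zero_or_pos n with h | h
    · simp [h]
    · exact (Nat.le_div_iff_mul_le (by norm_num)).mpr (by nlinarith)⟩ :
      ∃ m, n ≤ m * (m + 1) / 2)

/-- The basic sequence `Q = (2, 4, 4, 6, 6, 6, 8, 8, 8, 8, …)`: `q_n = 2m` on the `m`-th block. -/
def exQ : ℕ → ℕ := fun n => 2 * blockM n

/-- The digit sequence `E = (0, 0, 2, 0, 2, 4, 0, 2, 4, 6, …)`: at the `i`-th position of the
`m`-th block (`1 ≤ i ≤ m`), `E_n = 2(i-1)` where `i = n - m(m-1)/2`. -/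
def exE : ℕ → ℕ := fun n => 2 * (n - blockM n * (blockM n - 1) / 2 - 1)

def tri (m : ℕ) : ℕ := m * (m + 1) / 2

lemma tri_succ (m : ℕ) : tri (m + 1) = tri m + (m + 1) := by
  unfold tri
  have : (m+1)*(m+2) = m*(m+1) + (m+1)*2 := by ring
  rw [this, Nat.add_mul_div_right _ _ (by norm_num)]

lemma tri_mono : Monotone tri :=
  monotone_nat_of_le_succ (fun m => by rw [tri_succ]; omega)

lemma blockM_exists (n : ℕ) : ∃ m, n ≤ m * (m + 1) / 2 := by
  refine ⟨n, ?_⟩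
  rcases Nat.eq_zero_or_pos n with h | h
  · simp [h]
  · exact (Nat.le_div_iff_mul_le (by norm_num)).mpr (by nlinarith)

lemma blockM_def (n : ℕ) : blockM n = Nat.find (blockM_exists n) := rfl

lemma le_tri_blockM (n : ℕ) : n ≤ tri (blockM n) := by
  rw [blockM_def]; exact Nat.find_spec (blockM_exists n)

lemma tri_lt_of_lt_blockM {n k : ℕ} (h : k < blockM n) : tri k < n := by
  rw [blockM_def] at h
  exact Nat.lt_of_not_le (Nat.find_min (blockM_exists n) h)

lemma blockM_eq {m i : ℕ} (h1 : 1 ≤ i) (h2 : i ≤ m + 1) : blockM (tri m + i) = m + 1 := by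
  have hle : blockM (tri m + i) ≤ m + 1 := by
    have : tri m + i ≤ tri (m+1) := by rw [tri_succ]; omega
    exact Nat.find_le this
  have hgt : m < blockM (tri m + i) := by
    by_contra hc
    push_neg at hc
    have := le_tri_blockM (tri m + i)
    have := tri_mono hc
    omega
  omega

lemma exQ_eval {m i : ℕ} (h1 : 1 ≤ i) (h2 : i ≤ m + 1) : exQ (tri m + i) = 2 * (m + 1) := by
  unfold exQ; rw [blockM_eq h1 h2]

lemma exE_eval {m i : ℕ} (h1 : 1 ≤ i) (h2 : i ≤ m + 1) : exE (tri m + i) = 2 * (i - 1) := by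
  unfold exE
  rw [blockM_eq h1 h2]
  have : (m + 1) * (m + 1 - 1) / 2 = tri m := by unfold tri; rw [Nat.mul_comm]; simp
  rw [this]
  omega

/-- every `n ≥ 1` decomposes as `tri m + i`. -/
lemma exists_decomp {n : ℕ} (hn : 1 ≤ n) : ∃ m i, 1 ≤ i ∧ i ≤ m + 1 ∧ n = tri m + i := by
  have hb : 1 ≤ blockM n := by
    by_contra h
    push_neg at h
    interval_cases hbm : blockM n
    · have := le_tri_blockM n; rw [hbm] at this; simp [tri] at this; omega
  set m := blockM n - 1 with hm
  have hbm : blockM n = m + 1 := by omega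
  have h1 : tri m < n := tri_lt_of_lt_blockM (by omega)
  have h2 : n ≤ tri (m + 1) := by rw [← hbm]; exact le_tri_blockM n
  rw [tri_succ] at h2
  exact ⟨m, n - tri m, by omega, by omega, by omega⟩

lemma exQ_ge {n : ℕ} (hn : 1 ≤ n) : 2 ≤ exQ n := by
  obtain ⟨m, i, h1, h2, rfl⟩ := exists_decomp hn
  rw [exQ_eval h1 h2]; omega

lemma exE_le {n : ℕ} (hn : 1 ≤ n) : exE n + 2 ≤ exQ n := by
  obtain ⟨m, i, h1, h2, rfl⟩ := exists_decomp hn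
  rw [exQ_eval h1 h2, exE_eval h1 h2]; omega

lemma exE_even (n : ℕ) : Even (exE n) := ⟨n - blockM n * (blockM n - 1) / 2 - 1, by unfold exE; ring⟩

lemma exQ_even (n : ℕ) : Even (exQ n) := ⟨blockM n, by unfold exQ; ring⟩

/-- the `j`-th term of the tail sum starting after position `n`. -/
def aa (n j : ℕ) : ℝ := (exE (n+1+j) : ℝ) / ∏ i ∈ Finset.Icc (n+1) (n+1+j), (exQ i : ℝ)

lemma prod_exQ_pos (s : Finset ℕ) (hs : ∀ i ∈ s, 1 ≤ i) :
    0 < ∏ i ∈ s, (exQ i : ℝ) := by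
  apply Finset.prod_pos
  intro i hi
  have := exQ_ge (hs i hi)
  positivity

lemma aa_nonneg (n j : ℕ) : 0 ≤ aa n j := by
  unfold aa
  have := prod_exQ_pos (Finset.Icc (n+1) (n+1+j)) (by intro i hi; simp at hi; omega)
  positivity

lemma aa_le_geom (n j : ℕ) : aa n j ≤ (1/2 : ℝ)^j := by
  unfold aa
  have hsplit : ∏ i ∈ Finset.Icc (n+1) (n+1+j), (exQ i : ℝ)
      = (∏ i ∈ Finset.Icc (n+1) (n+j), (exQ i : ℝ)) * (exQ (n+1+j) : ℝ) := by
    have : n+1+j = (n+j)+1 := by omega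
    rw [this, Finset.prod_Icc_succ_top (show n+1 ≤ n+j+1 by omega)]
  have hE : (exE (n+1+j) : ℝ) ≤ (exQ (n+1+j) : ℝ) := by
    have := exE_le (n := n+1+j) (by omega); exact_mod_cast by omega
  have hP : (2:ℝ)^j ≤ ∏ i ∈ Finset.Icc (n+1) (n+j), (exQ i : ℝ) := by
    calc (2:ℝ)^j = ∏ _i ∈ Finset.Icc (n+1) (n+j), (2:ℝ) := by
          rw [Finset.prod_const, Nat.card_Icc]; congr 1; omega
      _ ≤ _ := by
          apply Finset.prod_le_prod (by intros; norm_num)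
          intro i hi
          simp only [Finset.mem_Icc] at hi
          exact_mod_cast exQ_ge (by omega)
  have hq : (0:ℝ) < exQ (n+1+j) := by
    have := exQ_ge (n := n+1+j) (by omega); positivity
  have hPpos : (0:ℝ) < ∏ i ∈ Finset.Icc (n+1) (n+j), (exQ i : ℝ) :=
    prod_exQ_pos _ (by intro i hi; simp at hi; omega)
  rw [hsplit]
  rw [div_le_iff₀ (by positivity)]
  have hhalf : (1/2:ℝ)^j * (2:ℝ)^j = 1 := by rw [← mul_pow]; norm_num
  have h3 : (1:ℝ) ≤ (1/2)^j * ∏ i ∈ Finset.Icc (n+1) (n+j), (exQ i : ℝ) := by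
    calc (1:ℝ) = (1/2)^j * (2:ℝ)^j := hhalf.symm
      _ ≤ _ := mul_le_mul_of_nonneg_left hP (by positivity)
  nlinarith [hq.le, hE]

lemma aa_summable (n : ℕ) : Summable (aa n) :=
  Summable.of_nonneg_of_le (aa_nonneg n) (aa_le_geom n) summable_geometric_two

/-- the tail `T_{Q,n}(x)` value. -/
def tt (n : ℕ) : ℝ := ∑' j, aa n j

lemma tt_nonneg (n : ℕ) : 0 ≤ tt n := tsum_nonneg (aa_nonneg n)

lemma tt_le_two (n : ℕ) : tt n ≤ 2 := by
  calc tt n ≤ ∑' j : ℕ, (1/2:ℝ)^j :=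
        Summable.tsum_le_tsum (aa_le_geom n) (aa_summable n) summable_geometric_two
    _ = 2 := tsum_geometric_two

lemma aa_zero (n : ℕ) : aa n 0 = (exE (n+1) : ℝ) / (exQ (n+1) : ℝ) := by
  unfold aa; simp

lemma aa_succ (n j : ℕ) : aa n (j+1) = aa (n+1) j / (exQ (n+1) : ℝ) := by
  unfold aa
  have hins : Finset.Icc (n+1) (n+1+(j+1)) = insert (n+1) (Finset.Icc (n+2) (n+2+j)) := by
    ext k; simp only [Finset.mem_Icc, Finset.mem_insert]; omega
  rw [hins, Finset.prod_insert (by simp)]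
  have : n+1+(j+1) = n+2+j := by omega
  rw [this]
  rw [div_div]
  ring_nf

lemma tt_rec (n : ℕ) : tt n = ((exE (n+1) : ℝ) + tt (n+1)) / (exQ (n+1) : ℝ) := by
  unfold tt
  rw [Summable.tsum_eq_zero_add (aa_summable n), aa_zero]
  have : ∀ j : ℕ, aa n (j+1) = aa (n+1) j * ((exQ (n+1) : ℝ))⁻¹ := by
    intro j; rw [aa_succ, div_eq_mul_inv]
  simp_rw [this]
  rw [tsum_mul_right]
  rw [add_div]
  ring

lemma exQ_pos' (n : ℕ) : (0:ℝ) < exQ (n+1) := by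
  have := exQ_ge (n := n+1) (by omega); positivity

lemma tt_le_one (n : ℕ) : tt n ≤ 1 := by
  rw [tt_rec]
  rw [div_le_one (exQ_pos' n)]
  have h1 := exE_le (n := n+1) (by omega)
  have h2 := tt_le_two (n+1)
  have : (exE (n+1) : ℝ) + 2 ≤ (exQ (n+1) : ℝ) := by exact_mod_cast h1
  linarith

lemma tt_lt_one (n : ℕ) : tt n < 1 := by
  rw [tt_rec]
  rw [div_lt_one (exQ_pos' n)]
  have h1 := exE_le (n := n+1) (by omega)
  have h2 := tt_le_one (n+1)
  have : (exE (n+1) : ℝ) + 2 ≤ (exQ (n+1) : ℝ) := by exact_mod_cast h1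
  linarith

lemma x_eq_tt0 : (∑' n : ℕ, (exE (n + 1) : ℝ) / (cantorProd exQ (n + 1) : ℝ)) = tt 0 := by
  unfold tt
  apply tsum_congr
  intro j
  unfold aa cantorProd
  simp only [show (0:ℕ)+1+j = j+1 from by omega, show (0:ℕ)+1 = 1 from rfl, Nat.cast_prod]

def AA : ℕ → ℕ
  | 0 => 0
  | (n+1) => exQ (n+1) * AA n + exE (n+1)

lemma cantorProd_succ (q : ℕ → ℕ) (n : ℕ) :
    cantorProd q (n+1) = cantorProd q n * q (n+1) := by
  unfold cantorProd
  exact Finset.prod_Icc_succ_top (show 1 ≤ n + 1 by omega) q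

lemma key (n : ℕ) : (cantorProd exQ n : ℝ) * tt 0 = (AA n : ℝ) + tt n := by
  induction n with
  | zero => simp [cantorProd, AA]
  | succ n ih =>
    have hq := exQ_pos' n
    have hrec : (exQ (n+1) : ℝ) * tt n = (exE (n+1) : ℝ) + tt (n+1) := by
      rw [tt_rec n, mul_div_cancel₀ _ (ne_of_gt hq)]
    rw [cantorProd_succ, Nat.cast_mul, mul_comm ((cantorProd exQ n : ℝ)) _, mul_assoc, ih,
        mul_add, hrec, show AA (n+1) = exQ (n+1) * AA n + exE (n+1) from rfl]
    push_cast
    ring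

lemma AA_even (n : ℕ) : Even (AA n) := by
  induction n with
  | zero => simp [AA]
  | succ n ih =>
    rw [show AA (n+1) = exQ (n+1) * AA n + exE (n+1) from rfl]
    exact Even.add (ih.mul_left _) (exE_even _)

lemma TQ_eq (n : ℕ) : TQ exQ n (tt 0) = tt n := by
  unfold TQ
  rw [key n]
  have : ((AA n : ℤ) : ℝ) = (AA n : ℝ) := by push_cast; ring
  rw [← this, Int.fract_intCast_add, Int.fract_eq_self.mpr ⟨tt_nonneg n, tt_lt_one n⟩]

lemma TQ_half (n : ℕ) : TQ exQ n (tt 0 / 2) = tt n / 2 := by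
  unfold TQ
  obtain ⟨k, hk⟩ := AA_even n
  have : (cantorProd exQ n : ℝ) * (tt 0 / 2) = (k : ℝ) + tt n / 2 := by
    rw [mul_div_assoc', key n, hk]; push_cast; ring
  rw [this]
  have h2 : ((k : ℤ) : ℝ) = (k : ℝ) := by push_cast; ring
  rw [← h2, Int.fract_intCast_add, Int.fract_eq_self.mpr ⟨by linarith [tt_nonneg n], by linarith [tt_lt_one n]⟩]

lemma tt_block (m i : ℕ) (h1 : 1 ≤ i) (h2 : i ≤ m+1) :
    ((i:ℝ) - 1)/((m:ℝ)+1) ≤ tt (tri m + i - 1) ∧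
    tt (tri m + i - 1) < ((i:ℝ) - 1)/((m:ℝ)+1) + 1/(2*((m:ℝ)+1)) := by
  have hn1 : tri m + i - 1 + 1 = tri m + i := by omega
  have hrec := tt_rec (tri m + i - 1)
  rw [hn1, exE_eval h1 h2, exQ_eval h1 h2] at hrec
  have hE : ((2 * (i-1) : ℕ) : ℝ) = 2*((i:ℝ)-1) := by
    push_cast [Nat.cast_sub h1]; ring
  have hQ : ((2 * (m+1) : ℕ) : ℝ) = 2*((m:ℝ)+1) := by push_cast; ring
  rw [hE, hQ] at hrec
  have hM : (0:ℝ) < (m:ℝ)+1 := by positivity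
  have ht0 := tt_nonneg (tri m + i)
  have ht1 := tt_lt_one (tri m + i)
  constructor
  · rw [hrec, div_le_div_iff₀ hM (by positivity)]
    nlinarith
  · rw [hrec, div_add_div _ _ (ne_of_gt hM) (by positivity), div_lt_div_iff₀ (by positivity) (by positivity)]
    nlinarith [mul_lt_mul_of_pos_right ht1 (by positivity : (0:ℝ) < ((m:ℝ)+1) * (2*((m:ℝ)+1)))]

def cnt (a b : ℝ) (N : ℕ) : ℕ := ((Finset.range N).filter (fun n => tt n ∈ Set.Ico a b)).card

def cblk (a b : ℝ) (m : ℕ) : ℕ :=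
  ((Finset.Icc 1 (m+1)).filter (fun i => tt (tri m + i - 1) ∈ Set.Ico a b)).card

lemma cnt_mono (a b : ℝ) {N N' : ℕ} (h : N ≤ N') : cnt a b N ≤ cnt a b N' :=
  Finset.card_le_card (Finset.filter_subset_filter _ (Finset.range_subset_range.mpr h))

lemma cnt_tri (a b : ℝ) (M : ℕ) : cnt a b (tri M) = ∑ m ∈ Finset.range M, cblk a b m := by
  induction M with
  | zero => simp [cnt, tri]
  | succ M ih =>
    rw [Finset.sum_range_succ, ← ih]
    unfold cnt
    rw [tri_succ, Finset.range_eq_Ico,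
      ← Finset.Ico_union_Ico_eq_Ico (Nat.zero_le (tri M)) (Nat.le_add_right _ _),
      Finset.filter_union,
      Finset.card_union_of_disjoint (Finset.disjoint_filter_filter
        (Finset.Ico_disjoint_Ico_consecutive 0 (tri M) _))]
    congr 1
    · rw [Finset.range_eq_Ico]
    unfold cblk
    apply Finset.card_bij' (fun n _ => n - tri M + 1) (fun i _ => tri M + i - 1)
    · intro n hn
      simp only [Finset.mem_filter, Finset.mem_Ico, Finset.mem_Icc] at hn ⊢
      refine ⟨⟨by omega, by omega⟩, ?_⟩
      have : tri M + (n - tri M + 1) - 1 = n := by omega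
      rw [this]
      exact hn.2
    · intro i hi
      simp only [Finset.mem_filter, Finset.mem_Ico, Finset.mem_Icc] at hi ⊢
      exact ⟨⟨by omega, by omega⟩, hi.2⟩
    · intro n hn
      simp only [Finset.mem_filter, Finset.mem_Ico] at hn
      omega
    · intro i hi
      simp only [Finset.mem_filter, Finset.mem_Icc] at hi
      omega


lemma cblk_upper {a b : ℝ} (ha : 0 ≤ a) (hab : a < b) (hb : b ≤ 1) (m : ℕ) :
    (cblk a b m : ℝ) ≤ ((m:ℝ)+1)*(b-a) + 3 := by
  set M : ℝ := (m:ℝ)+1 with hMdef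
  have hM : (0:ℝ) < M := by positivity
  have hα : (0:ℝ) ≤ a * M := by positivity
  have hsub : ((Finset.Icc 1 (m+1)).filter (fun i => tt (tri m + i - 1) ∈ Set.Ico a b)) ⊆
      Finset.Icc (⌊a*M⌋₊ + 1) (⌊b*M⌋₊ + 1) := by
    intro i hi
    simp only [Finset.mem_filter, Finset.mem_Icc, Set.mem_Ico] at hi ⊢
    obtain ⟨⟨hi1, hi2⟩, hta, htb⟩ := hi
    obtain ⟨hlo, hhi⟩ := tt_block m i hi1 hi2
    constructor
    · have h1 : a * M < (i:ℝ) := by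
        have h' : a ≤ ((i:ℝ)-1)/M + 1/(2*M) := le_of_lt (lt_of_le_of_lt hta hhi)
        have h'' : (((i:ℝ)-1)/M + 1/(2*M)) * M = (i:ℝ) - 1 + 1/2 := by field_simp
        nlinarith [mul_le_mul_of_nonneg_right h' hM.le]
      have := (Nat.floor_lt hα).mpr h1
      omega
    · have h1 : ((i:ℝ)) - 1 < b * M := by
        have h' : ((i:ℝ)-1)/M < b := lt_of_le_of_lt hlo htb
        calc ((i:ℝ)) - 1 = ((i:ℝ)-1)/M * M := by field_simp
          _ < b * M := mul_lt_mul_of_pos_right h' hM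
      have h2 : (i - 1 : ℕ) ≤ ⌊b*M⌋₊ := by
        apply Nat.le_floor
        have hc : ((i-1:ℕ):ℝ) = (i:ℝ) - 1 := by push_cast [Nat.cast_sub hi1]; ring
        rw [hc]; linarith
      omega
  have hcard : cblk a b m ≤ ⌊b*M⌋₊ + 1 + 1 - (⌊a*M⌋₊ + 1) := by
    unfold cblk
    calc _ ≤ (Finset.Icc (⌊a*M⌋₊ + 1) (⌊b*M⌋₊ + 1)).card := Finset.card_le_card hsub
      _ = _ := by rw [Nat.card_Icc]
  have h1 : (⌊b*M⌋₊ : ℝ) ≤ b*M := Nat.floor_le (by nlinarith)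
  have h2 : a*M - 1 < (⌊a*M⌋₊ : ℝ) := by
    have := Nat.lt_floor_add_one (a*M); linarith
  by_cases hc : ⌊a*M⌋₊ + 1 ≤ ⌊b*M⌋₊ + 1 + 1
  · have hr : (cblk a b m : ℝ) ≤ (⌊b*M⌋₊ : ℝ) + 2 - ((⌊a*M⌋₊:ℝ) + 1) := by
      have hcast : ((⌊b*M⌋₊ + 1 + 1 - (⌊a*M⌋₊ + 1) : ℕ) : ℝ) = (⌊b*M⌋₊ : ℝ) + 2 - ((⌊a*M⌋₊ : ℝ) + 1) := by
        rw [Nat.cast_sub hc]; push_cast; ring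
      calc (cblk a b m : ℝ) ≤ ((⌊b*M⌋₊ + 1 + 1 - (⌊a*M⌋₊ + 1) : ℕ) : ℝ) := by exact_mod_cast hcard
        _ = _ := hcast
    nlinarith
  · have hz : cblk a b m = 0 := by omega
    rw [hz]
    have : (0:ℝ) ≤ M*(b-a) := by nlinarith
    push_cast
    linarith

lemma cblk_lower {a b : ℝ} (ha : 0 ≤ a) (hab : a < b) (hb : b ≤ 1) (m : ℕ) :
    ((m:ℝ)+1)*(b-a) - 3 ≤ (cblk a b m : ℝ) := by
  set M : ℝ := (m:ℝ)+1 with hMdef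
  have hM : (0:ℝ) < M := by positivity
  have hβ : (0:ℝ) ≤ b * M := by nlinarith
  have hfl1 : (⌊b*M⌋₊:ℝ) ≤ b*M := Nat.floor_le hβ
  have hfl2 : b*M - 1 < (⌊b*M⌋₊:ℝ) := by have := Nat.lt_floor_add_one (b*M); linarith
  have hfl3 : (⌊a*M⌋₊:ℝ) ≤ a*M := Nat.floor_le (by positivity)
  have hfl4 : a*M - 1 < (⌊a*M⌋₊:ℝ) := by have := Nat.lt_floor_add_one (a*M); linarith
  by_cases hc : ⌊a*M⌋₊ + 2 ≤ ⌊b*M⌋₊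
  · have hsub : Finset.Icc (⌊a*M⌋₊ + 2) ⌊b*M⌋₊ ⊆
        ((Finset.Icc 1 (m+1)).filter (fun i => tt (tri m + i - 1) ∈ Set.Ico a b)) := by
      intro i hi'
      simp only [Finset.mem_Icc] at hi'
      obtain ⟨h1, h2⟩ := hi'
      have hib : (i:ℝ) ≤ b*M := by
        have : (i:ℝ) ≤ (⌊b*M⌋₊:ℝ) := by exact_mod_cast h2
        linarith
      have hile : i ≤ m + 1 := by
        have hi' : (i:ℝ) ≤ M := by nlinarith
        have : (i:ℝ) ≤ ((m+1:ℕ):ℝ) := by push_cast; linarith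
        exact_mod_cast this
      have hi1 : 1 ≤ i := by omega
      obtain ⟨hlo', hhi'⟩ := tt_block m i hi1 hile
      simp only [Finset.mem_filter, Finset.mem_Icc, Set.mem_Ico]
      refine ⟨⟨hi1, hile⟩, ?_, ?_⟩
      · have hia : a*M < (i:ℝ) - 1 := by
          have : (⌊a*M⌋₊:ℝ) + 2 ≤ (i:ℝ) := by exact_mod_cast h1
          linarith
        have : a ≤ ((i:ℝ)-1)/M := by
          rw [le_div_iff₀ hM]; nlinarith
        linarith [hlo']
      · have : ((i:ℝ)-1)/M + 1/(2*M) ≤ b := by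
          rw [div_add_div _ _ (ne_of_gt hM) (by positivity), div_le_iff₀ (by positivity)]
          nlinarith
        linarith [hhi']
    have hcard : ⌊b*M⌋₊ + 1 - (⌊a*M⌋₊ + 2) ≤ cblk a b m := by
      unfold cblk
      calc ⌊b*M⌋₊ + 1 - (⌊a*M⌋₊ + 2) = (Finset.Icc (⌊a*M⌋₊ + 2) ⌊b*M⌋₊).card := by rw [Nat.card_Icc]
        _ ≤ _ := Finset.card_le_card hsub
    have hcast : ((⌊b*M⌋₊ + 1 - (⌊a*M⌋₊ + 2) : ℕ):ℝ) = (⌊b*M⌋₊:ℝ) + 1 - ((⌊a*M⌋₊:ℝ) + 2) := by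
      rw [Nat.cast_sub (by omega)]; push_cast; ring
    have hr : (⌊b*M⌋₊:ℝ) + 1 - ((⌊a*M⌋₊:ℝ) + 2) ≤ (cblk a b m : ℝ) := by
      rw [← hcast]; exact_mod_cast hcard
    nlinarith
  · have h1 : (⌊b*M⌋₊:ℝ) < (⌊a*M⌋₊:ℝ) + 2 := by exact_mod_cast Nat.lt_of_not_le (by omega)
    have : M*(b-a) < 3 := by nlinarith
    have h0 : (0:ℝ) ≤ (cblk a b m : ℝ) := by positivity
    linarith

lemma sum_tri_real (K : ℕ) : ∑ m ∈ Finset.range K, ((m:ℝ)+1) = (tri K : ℝ) := by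
  induction K with
  | zero => simp [tri]
  | succ K ih => rw [Finset.sum_range_succ, ih, tri_succ]; push_cast; ring

lemma blockM_pos {N : ℕ} (hN : 1 ≤ N) : 1 ≤ blockM N := by
  by_contra h
  have h0 : blockM N = 0 := by omega
  have := le_tri_blockM N
  rw [h0] at this
  simp [tri] at this
  omega

lemma two_tri (k : ℕ) : 2 * tri k = k * (k+1) := by
  unfold tri
  exact Nat.mul_div_cancel' (Nat.even_mul_succ_self k).two_dvd

lemma tri_pred {K : ℕ} (h : 1 ≤ K) : tri K = tri (K-1) + K := by
  obtain ⟨j, rfl⟩ := Nat.exists_eq_add_of_le h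
  rw [show 1+j = j+1 by omega, tri_succ]
  simp

lemma blockM_sq {N : ℕ} (hN : 1 ≤ N) : blockM N * blockM N ≤ 9 * N := by
  set K := blockM N with hK
  have hK1 : 1 ≤ K := blockM_pos hN
  have htl : tri (K-1) < N := tri_lt_of_lt_blockM (by omega)
  have h2t := two_tri (K-1)
  have hKK : (K-1) * K ≤ 2 * (N-1) := by
    have : tri (K-1) ≤ N - 1 := by omega
    have := Nat.mul_le_mul_left 2 this
    rw [h2t] at this
    have hr : (K-1) * ((K-1)+1) = (K-1)*K := by congr 1; omega
    omega
  rcases le_or_gt K 3 with h | h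
  · have : K * K ≤ 9 := by interval_cases K <;> norm_num
    omega
  · have h2 : K*K ≤ 2*((K-1)*K) := by
      obtain ⟨j, hj⟩ := Nat.exists_eq_add_of_lt h
      rw [hj]
      have : 3 + j + 1 - 1 = 3 + j := by omega
      rw [this]
      nlinarith
    omega

lemma blockM_tendsto : Tendsto blockM atTop atTop := by
  apply tendsto_atTop_atTop.mpr
  intro k
  refine ⟨tri k + 1, fun N hN => ?_⟩
  by_contra h
  push_neg at h
  have h1 : blockM N ≤ k := by omega
  have := tri_mono h1
  have := le_tri_blockM N
  omega

lemma cnt_bounds {a b : ℝ} (ha : 0 ≤ a) (hab : a < b) (hb : b ≤ 1) {N : ℕ} (hN : 1 ≤ N) :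
    (b-a) - 4*(blockM N : ℝ)/N ≤ (cnt a b N : ℝ) / N ∧
    (cnt a b N : ℝ) / N ≤ (b-a) + 4*(blockM N : ℝ)/N := by
  set K := blockM N with hK
  have hK1 : 1 ≤ K := blockM_pos hN
  have htl : tri (K-1) < N := tri_lt_of_lt_blockM (by omega)
  have hltb := le_tri_blockM N
  rw [← hK] at hltb
  clear_value K
  have htu : N ≤ tri (K-1) + K := by
    have h2 := tri_pred hK1
    omega
  have hNpos : (0:ℝ) < N := by exact_mod_cast hN
  have hKpos : (0:ℝ) < K := by exact_mod_cast hK1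
  have hba : b - a ≤ 1 := by linarith
  have hba0 : 0 < b - a := by linarith
  -- upper
  have hup : (cnt a b N : ℝ) ≤ (b-a)*N + 4*K := by
    have h1 : cnt a b N ≤ cnt a b (tri K) := cnt_mono a b hltb
    have h2 : (cnt a b (tri K) : ℝ) = ∑ m ∈ Finset.range K, (cblk a b m : ℝ) := by
      rw [cnt_tri]; push_cast; ring
    have h3 : ∑ m ∈ Finset.range K, (cblk a b m : ℝ) ≤ ∑ m ∈ Finset.range K, (((m:ℝ)+1)*(b-a) + 3) :=
      Finset.sum_le_sum (fun m _ => cblk_upper ha hab hb m)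
    have h4 : ∑ m ∈ Finset.range K, (((m:ℝ)+1)*(b-a) + 3) = (tri K : ℝ)*(b-a) + 3*K := by
      rw [Finset.sum_add_distrib, ← Finset.sum_mul, sum_tri_real, Finset.sum_const,
        Finset.card_range]
      push_cast; ring
    have h5 : (tri K : ℝ) ≤ (N:ℝ) + K := by
      have h2 := tri_pred hK1
      have : tri K ≤ N + K := by omega
      exact_mod_cast this
    have h6 : (cnt a b N : ℝ) ≤ (cnt a b (tri K) : ℝ) := by exact_mod_cast h1
    nlinarith
  -- lower
  have hlo : (b-a)*N - 4*K ≤ (cnt a b N : ℝ) := by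
    have h1 : cnt a b (tri (K-1)) ≤ cnt a b N := cnt_mono a b (by omega)
    have h2 : (cnt a b (tri (K-1)) : ℝ) = ∑ m ∈ Finset.range (K-1), (cblk a b m : ℝ) := by
      rw [cnt_tri]; push_cast; ring
    have h3 : ∑ m ∈ Finset.range (K-1), (((m:ℝ)+1)*(b-a) - 3) ≤ ∑ m ∈ Finset.range (K-1), (cblk a b m : ℝ) :=
      Finset.sum_le_sum (fun m _ => cblk_lower ha hab hb m)
    have h4 : ∑ m ∈ Finset.range (K-1), (((m:ℝ)+1)*(b-a) - 3) = (tri (K-1) : ℝ)*(b-a) - 3*(K-1:ℕ) := by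
      rw [Finset.sum_sub_distrib, ← Finset.sum_mul, sum_tri_real, Finset.sum_const,
        Finset.card_range]
      push_cast; ring
    have h5 : (N:ℝ) - K ≤ (tri (K-1) : ℝ) := by
      have : (N:ℝ) ≤ (tri (K-1):ℝ) + K := by exact_mod_cast htu
      linarith
    have h6 : (cnt a b (tri (K-1)) : ℝ) ≤ (cnt a b N : ℝ) := by exact_mod_cast h1
    have h7 : ((K-1:ℕ):ℝ) ≤ (K:ℝ) := by
      have : (K-1:ℕ) ≤ K := by omega
      exact_mod_cast this
    nlinarith
  constructor
  · calc (b-a) - 4*(K:ℝ)/N = ((b-a)*N - 4*K)/N := by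
          field_simp
      _ ≤ (cnt a b N : ℝ)/N := by
          rw [div_le_div_iff₀ hNpos hNpos]
          nlinarith [mul_le_mul_of_nonneg_right hlo hNpos.le]
  · calc (cnt a b N : ℝ)/N ≤ ((b-a)*N + 4*K)/N := by
          rw [div_le_div_iff₀ hNpos hNpos]
          nlinarith [mul_le_mul_of_nonneg_right hup hNpos.le]
      _ = (b-a) + 4*(K:ℝ)/N := by
          field_simp

lemma blockM_ratio_tendsto :
    Tendsto (fun N : ℕ => 4*(blockM N : ℝ)/N) atTop (nhds 0) := by
  have hb : Tendsto (fun N : ℕ => (blockM N : ℝ)) atTop atTop :=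
    tendsto_natCast_atTop_atTop.comp blockM_tendsto
  have hg : Tendsto (fun N : ℕ => 36/(blockM N : ℝ)) atTop (nhds 0) := by
    simp only [div_eq_mul_inv]
    have := hb.inv_tendsto_atTop.const_mul (36:ℝ)
    simpa using this
  apply squeeze_zero' ?_ ?_ hg
  · filter_upwards [eventually_ge_atTop 1] with N hN
    have := blockM_pos hN
    positivity
  · filter_upwards [eventually_ge_atTop 1] with N hN
    have hK1 := blockM_pos hN
    have hsq := blockM_sq hN
    have hNpos : (0:ℝ) < N := by exact_mod_cast hN
    have hKpos : (0:ℝ) < (blockM N : ℝ) := by exact_mod_cast hK1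
    rw [div_le_div_iff₀ hNpos hKpos]
    have : ((blockM N * blockM N : ℕ):ℝ) ≤ ((9*N : ℕ):ℝ) := by exact_mod_cast hsq
    push_cast at this
    nlinarith

lemma main_tendsto {a b : ℝ} (ha : 0 ≤ a) (hab : a < b) (hb : b ≤ 1) :
    Tendsto (fun N => (cnt a b N : ℝ)/N) atTop (nhds (b-a)) := by
  have hlo : Tendsto (fun N : ℕ => (b-a) - 4*(blockM N : ℝ)/N) atTop (nhds (b-a)) := by
    have := (tendsto_const_nhds (x := b-a) (f := (atTop : Filter ℕ))).sub blockM_ratio_tendsto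
    simpa using this
  have hhi : Tendsto (fun N : ℕ => (b-a) + 4*(blockM N : ℝ)/N) atTop (nhds (b-a)) := by
    have := (tendsto_const_nhds (x := b-a) (f := (atTop : Filter ℕ))).add blockM_ratio_tendsto
    simpa using this
  apply tendsto_of_tendsto_of_tendsto_of_le_of_le' hlo hhi
  · filter_upwards [eventually_ge_atTop 1] with N hN
    exact (cnt_bounds ha hab hb hN).1
  · filter_upwards [eventually_ge_atTop 1] with N hN
    exact (cnt_bounds ha hab hb hN).2

lemma main_tendsto' {a b : ℝ} (ha : 0 ≤ a) (hab : a < b) (hb : b ≤ 1)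
    (P : ℕ → Prop) [DecidablePred P] (hP : ∀ n, P n ↔ tt n ∈ Set.Ico a b) :
    Tendsto (fun N => ((Finset.filter P (Finset.range N)).card : ℝ)/N) atTop (nhds (b-a)) := by
  have hs : ∀ N, Finset.filter P (Finset.range N)
      = Finset.filter (fun n => tt n ∈ Set.Ico a b) (Finset.range N) := fun N =>
    Finset.ext (fun n => by simp only [Finset.mem_filter, hP n])
  refine Filter.Tendsto.congr (f₁ := fun N => (cnt a b N : ℝ)/N) (fun N => ?_)
    (main_tendsto ha hab hb)
  unfold cnt
  rw [hs N]

/-- for `x = ∑ E_n/(q_1 ⋯ q_n)` with the above `Q` and `E`, `x` is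
`Q`-distribution normal but `x/2` is not. -/
theorem stmt_3 :
    QDistNormal exQ (∑' n : ℕ, (exE (n + 1) : ℝ) / (cantorProd exQ (n + 1) : ℝ)) ∧
    ¬ QDistNormal exQ ((∑' n : ℕ, (exE (n + 1) : ℝ) / (cantorProd exQ (n + 1) : ℝ)) / 2) := by
  rw [x_eq_tt0]
  constructor
  · intro a b ha hab hb
    refine main_tendsto' ha hab hb _ (fun n => ?_)
    simp only
    rw [TQ_eq n, Int.fract_eq_self.mpr ⟨tt_nonneg n, tt_lt_one n⟩]
  · intro h
    have h2 := h (1/2) 1 (by norm_num) (by norm_num) (le_refl 1)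
    have h3 : Tendsto (fun _ : ℕ => (0:ℝ)) atTop (nhds ((1:ℝ) - 1/2)) := by
      refine h2.congr (fun N => ?_)
      have hemp : ∀ n ∈ Finset.range N,
          ¬ (Int.fract ((fun n => TQ exQ n (tt 0 / 2)) n) ∈ Set.Ico (1/2:ℝ) 1) := by
        intro n _
        simp only
        rw [TQ_half n, Int.fract_eq_self.mpr
          ⟨by linarith [tt_nonneg n], by linarith [tt_lt_one n]⟩]
        simp only [Set.mem_Ico, not_and, not_lt]
        intro hcon
        linarith [tt_lt_one n]
      rw [Finset.filter_false_of_mem hemp]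
      simp
    have := tendsto_nhds_unique h3 tendsto_const_nhds
    norm_num at this
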